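/- Let G be a finite group, H a subset of G, and γ a gamma function on G. Then any two of the following conditions imply the third: (1) H is a subgroup of G; (2) H is a subgroup of (G,∘); (3) H is invariant under γ(H). Moreover, if these conditions hold, then (H,∘) is isomorphic to a regular subgroup of Hol(H). -/

import Mathlib

/- Formalization of results from "Hopf-Galois structures on extensions of degree p²q and
skew braces of order p²q: the cyclic Sylow p-subgroup case" (Campedel, Caranti, Del Corso).

Conventions: the paper composes permutations/automorphisms left-to-right and writes
`x^α` for the action; in Mathlib composition is right-to-left, so the paper's product
`αβ` is rendered as `β * α`, the paper's `x^α` as `α x`, and the paper's conjugate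
`α^β = β⁻¹αβ` as `β * α * β⁻¹`. -/

namespace HGS

universe u v

variable {G : Type*} [Group G]

/-- The right regular representation `ρ`: `rhoPerm g` is the permutation `x ↦ x * g`. -/
def rhoPerm (g : G) : Equiv.Perm G := Equiv.mulRight g

/-- The image `ρ(G)` of the right regular representation, as a subgroup of `Equiv.Perm G`. -/
def rhoSubgroup (G : Type*) [Group G] : Subgroup (Equiv.Perm G) where
  carrier := Set.range (rhoPerm (G := G))
  one_mem' := ⟨1, by ext x; simp [rhoPerm]⟩
  mul_mem' := by
    rintro _ _ ⟨g, rfl⟩ ⟨h, rfl⟩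
    exact ⟨h * g, by ext x; simp [rhoPerm, Equiv.Perm.mul_apply, mul_assoc]⟩
  inv_mem' := by
    rintro _ ⟨g, rfl⟩
    exact ⟨g⁻¹, by ext x; simp [rhoPerm, Equiv.Perm.inv_def, Equiv.mulRight_symm]⟩

/-- The (permutational) holomorph of `G`: the normalizer in the symmetric group
`Perm G` of the image of the right regular representation. -/
def Hol (G : Type*) [Group G] : Subgroup (Equiv.Perm G) :=
  Subgroup.normalizer ((rhoSubgroup G : Subgroup (Equiv.Perm G)) : Set (Equiv.Perm G))

/-- A subgroup `N ≤ Perm G` is regular if it acts simply transitively on the set `G`. -/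
def IsRegularSubgroup (N : Subgroup (Equiv.Perm G)) : Prop :=
  ∀ x y : G, ∃! n : N, (n : Equiv.Perm G) x = y

/-- A gamma function (GF) on `G`: a map `γ : G → Aut G` satisfying the gamma functional
equation `γ(g^{γ(h)}·h) = γ(g)γ(h)` (the right-hand side is the paper's product, which in
Mathlib's composition order reads `γ h * γ g`). -/
def IsGammaFunction (γ : G → MulAut G) : Prop :=
  ∀ g h : G, γ (γ h g * h) = γ h * γ g

/-- The circle operation `g ∘ h = g^{γ(h)} · h` associated to a gamma function. -/
def circ (γ : G → MulAut G) (g h : G) : G := γ h g * h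

/-- `H` is a subgroup of `(G, ∘)`: it contains the identity `1` of `(G, ∘)` and is closed
under the circle operation and under the circle inverse `g ↦ g^{-γ(g)⁻¹} = (γ g)⁻¹ g⁻¹`. -/
def IsCircSubgroup (γ : G → MulAut G) (H : Set G) : Prop :=
  (1 : G) ∈ H ∧ (∀ x ∈ H, ∀ y ∈ H, circ γ x y ∈ H) ∧ ∀ x ∈ H, ((γ x)⁻¹ x⁻¹ : G) ∈ H

/-- If `H` is finite and invariant under `γ(H)`, it is also invariant under the
inverses `γ(y)⁻¹` for `y ∈ H`. -/
lemma inv_maps {G : Type u} [Group G] [Finite G] (γ : G → MulAut G)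
    (H : Set G) (hinv : ∀ x ∈ H, ∀ y ∈ H, γ y x ∈ H) :
    ∀ x ∈ H, ∀ y ∈ H, ((γ y)⁻¹ x : G) ∈ H := by
  intro x hx y hy
  have hmt : Set.MapsTo (γ y) H H := fun z hz => hinv z hz y hy
  have hbij := (Set.Finite.injOn_iff_bijOn_of_mapsTo (Set.toFinite H) hmt).mp
    (γ y).injective.injOn
  obtain ⟨z, hz, hzx⟩ := hbij.surjOn hx
  rw [← hzx]
  simpa using hz

lemma gamma_one {G : Type u} [Group G] (γ : G → MulAut G) (hγ : IsGammaFunction γ) :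
    γ (1 : G) = 1 := by
  have h := hγ 1 1
  simp only [map_one, one_mul] at h
  have h2 : γ (1 : G) * 1 = γ (1 : G) * γ (1 : G) := by rw [mul_one, ← h]
  exact (mul_left_cancel h2).symm

lemma circ_assoc {G : Type u} [Group G] (γ : G → MulAut G) (hγ : IsGammaFunction γ)
    (g h k : G) : circ γ (circ γ g h) k = circ γ g (circ γ h k) := by
  simp only [circ, hγ h k, map_mul, MulAut.mul_apply, mul_assoc]

lemma circ_one {G : Type u} [Group G] (γ : G → MulAut G) (hγ : IsGammaFunction γ)
    (g : G) : circ γ g 1 = g := by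
  simp [circ, gamma_one γ hγ]

lemma one_circ {G : Type u} [Group G] (γ : G → MulAut G) (g : G) : circ γ 1 g = g := by
  simp [circ]

lemma mulAut_apply_inv {G : Type u} [Group G] (f : MulAut G) (z : G) :
    f (f⁻¹ z) = z := f.apply_symm_apply z

lemma circ_left_inv {G : Type u} [Group G] (γ : G → MulAut G) (g : G) :
    circ γ ((γ g)⁻¹ g⁻¹) g = 1 := by
  have h : γ g ((γ g)⁻¹ g⁻¹) = g⁻¹ := mulAut_apply_inv _ _
  simp [circ, h]

/-- Proposition `prop:2su3` of the paper.  For `H ⊆ G` and a gamma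
function `γ` on `G`, any two of the following imply the third: (1) `H ≤ G`;
(2) `H ≤ (G, ∘)`; (3) `H` is `γ(H)`-invariant.  If they hold, `(H, ∘)` is isomorphic to
a regular subgroup of `Hol H`. -/
theorem two_of_three_subgroup_conditions
    {G : Type u} [Group G] [Finite G] (γ : G → MulAut G) (hγ : IsGammaFunction γ)
    (H : Set G) :
    ((∃ K : Subgroup G, (K : Set G) = H) → IsCircSubgroup γ H →
      (∀ x ∈ H, ∀ y ∈ H, γ y x ∈ H)) ∧
    ((∃ K : Subgroup G, (K : Set G) = H) → (∀ x ∈ H, ∀ y ∈ H, γ y x ∈ H) →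
      IsCircSubgroup γ H) ∧
    (IsCircSubgroup γ H → (∀ x ∈ H, ∀ y ∈ H, γ y x ∈ H) →
      (∃ K : Subgroup G, (K : Set G) = H)) ∧
    (∀ K : Subgroup G, (K : Set G) = H → IsCircSubgroup γ H →
      (∀ x ∈ H, ∀ y ∈ H, γ y x ∈ H) →
      ∃ hcl : ∀ x y : K, circ γ (x : G) (y : G) ∈ K,
      ∃ N : Subgroup (Equiv.Perm K), N ≤ Hol K ∧ IsRegularSubgroup N ∧
        ∃ e : K ≃ N, ∀ x y : K, e ⟨circ γ (x : G) (y : G), hcl x y⟩ = e x * e y) := by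
  refine ⟨?_, ?_, ?_, ?_⟩
  · -- (1) & (2) → (3)
    rintro ⟨K, rfl⟩ hc x hx y hy
    have h1 : circ γ x y ∈ K := hc.2.1 x hx y hy
    have h2 : γ y x = circ γ x y * y⁻¹ := by simp [circ]
    rw [h2]
    exact K.mul_mem h1 (K.inv_mem hy)
  · -- (1) & (3) → (2)
    rintro ⟨K, rfl⟩ hinv
    refine ⟨K.one_mem, ?_, ?_⟩
    · intro x hx y hy
      exact K.mul_mem (hinv x hx y hy) hy
    · intro x hx
      exact inv_maps γ (↑K) hinv x⁻¹ (K.inv_mem hx) x hx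
  · -- (2) & (3) → (1)
    intro hc hinv
    refine ⟨{ carrier := H
              one_mem' := hc.1
              mul_mem' := ?_
              inv_mem' := ?_ }, rfl⟩
    · intro a b ha hb
      have h1 : ((γ b)⁻¹ a : G) ∈ H := inv_maps γ H hinv a ha b hb
      have h2 := hc.2.1 _ h1 b hb
      have h3 : circ γ ((γ b)⁻¹ a) b = a * b := by
        rw [circ, mulAut_apply_inv]
      rwa [h3] at h2
    · intro a ha
      have h1 := hc.2.2 a ha
      have h2 := hinv _ h1 a ha
      rwa [mulAut_apply_inv] at h2
  · -- the regular subgroup of the holomorph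
    intro K hK hc hinv
    subst hK
    have hcl : ∀ x y : K, circ γ (x : G) (y : G) ∈ K := fun x y => hc.2.1 _ x.2 _ y.2
    refine ⟨hcl, ?_⟩
    -- circle operation on K
    set cK : K → K → K := fun x y => ⟨circ γ (x : G) (y : G), hcl x y⟩ with hcK
    have cK_coe : ∀ x y : K, (cK x y : G) = circ γ (x : G) (y : G) := fun _ _ => rfl
    have cK_assoc : ∀ x y z : K, cK (cK x y) z = cK x (cK y z) := by
      intro x y z
      apply Subtype.ext
      simpa [cK_coe] using circ_assoc γ hγ (x : G) y z
    have cK_one : ∀ x : K, cK x 1 = x := by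
      intro x; apply Subtype.ext; simpa [cK_coe] using circ_one γ hγ (x : G)
    have one_cK : ∀ x : K, cK 1 x = x := by
      intro x; apply Subtype.ext; simpa [cK_coe] using one_circ γ (x : G)
    -- circle inverse on K
    set xi : K → K := fun x => ⟨(γ (x : G))⁻¹ ((x : G))⁻¹, by
      simpa using hc.2.2 (x : G) x.2⟩ with hxi
    have xi_left : ∀ x : K, cK (xi x) x = 1 := by
      intro x; apply Subtype.ext
      exact circ_left_inv γ (x : G)
    have xi_right : ∀ x : K, cK x (xi x) = 1 := by
      intro x
      calc cK x (xi x) = cK (cK (xi (xi x)) (xi x)) (cK x (xi x)) := by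
            rw [xi_left, one_cK]
        _ = cK (xi (xi x)) (cK (cK (xi x) x) (xi x)) := by
            rw [cK_assoc, cK_assoc]
        _ = 1 := by rw [xi_left, one_cK, xi_left]
    -- the translations
    have hinj : ∀ k : K, Function.Injective (fun x : K => cK x k) := by
      intro k x y hxy
      have h1 : γ (k : G) x * k = γ (k : G) y * k := congrArg Subtype.val hxy
      exact Subtype.ext ((γ (k : G)).injective (mul_right_cancel h1))
    set ν : K → Equiv.Perm K :=
      fun k => Equiv.ofBijective _ (Finite.injective_iff_bijective.mp (hinj k)) with hν
    have νapp : ∀ k x : K, ν k x = cK x k := fun _ _ => rfl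
    have νmul : ∀ h k : K, ν (cK h k) = ν k * ν h := by
      intro h k
      apply Equiv.ext
      intro x
      show cK x (cK h k) = ν k (ν h x)
      rw [νapp, νapp, ← cK_assoc]
    have νone : ν 1 = 1 := by
      apply Equiv.ext; intro x; rw [νapp, cK_one]; rfl
    have νinv : ∀ k : K, ν (xi k) = (ν k)⁻¹ := by
      intro k
      refine eq_inv_of_mul_eq_one_left ?_
      rw [← νmul, xi_right, νone]
    have νcancel : ∀ x k k' : K, ν k x = ν k' x → k = k' := by
      intro x k k' h
      rw [νapp, νapp] at h
      have h2 : cK (xi x) (cK x k) = cK (xi x) (cK x k') := by rw [h]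
      rwa [← cK_assoc, ← cK_assoc, xi_left, one_cK, one_cK] at h2
    -- the subgroup N
    set N : Subgroup (Equiv.Perm K) :=
      { carrier := Set.range ν
        one_mem' := ⟨1, νone⟩
        mul_mem' := by
          rintro _ _ ⟨a, rfl⟩ ⟨b, rfl⟩
          exact ⟨cK b a, νmul b a⟩
        inv_mem' := by
          rintro _ ⟨k, rfl⟩
          exact ⟨xi k, νinv k⟩ } with hN
    have hmemN : ∀ k : K, ν k ∈ N := fun k => ⟨k, rfl⟩
    refine ⟨N, ?_, ?_, ?_⟩
    · -- N ≤ Hol K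
      rintro _ ⟨k, rfl⟩
      rw [Hol, Subgroup.mem_normalizer_iff]
      intro g
      constructor
      · rintro ⟨h, rfl⟩
        have hmem : (k : G)⁻¹ * γ (k : G) h * k ∈ K :=
          K.mul_mem (K.mul_mem (K.inv_mem k.2) (hinv _ h.2 _ k.2)) k.2
        refine ⟨⟨_, hmem⟩, ?_⟩
        have key : rhoPerm (⟨_, hmem⟩ : K) * ν k = ν k * rhoPerm h := by
          apply Equiv.ext
          intro x
          show ν k x * _ = ν k (x * h)
          apply Subtype.ext
          show (ν k x : G) * ((k : G)⁻¹ * γ (k : G) h * k) = (cK (x * h) k : G)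
          rw [νapp]
          show (cK x k : G) * ((k : G)⁻¹ * γ (k : G) h * k) = _
          simp only [cK_coe, circ, map_mul, Subgroup.coe_mul]
          group
        rw [← key]
        group
      · rintro ⟨h, hh⟩
        have hmem : ((γ (k : G))⁻¹ ((k : G) * h * (k : G)⁻¹) : G) ∈ K :=
          inv_maps γ (↑K) hinv _
            (K.mul_mem (K.mul_mem k.2 h.2) (K.inv_mem k.2)) _ k.2
        refine ⟨⟨_, hmem⟩, ?_⟩
        have key : ν k * rhoPerm (⟨_, hmem⟩ : K) = rhoPerm h * ν k := by
          apply Equiv.ext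
          intro x
          show ν k (x * _) = ν k x * h
          apply Subtype.ext
          rw [νapp, νapp]
          show (cK (x * ⟨_, hmem⟩) k : G) = (cK x k : G) * h
          simp only [cK_coe, circ, map_mul, Subgroup.coe_mul, mulAut_apply_inv]
          group
        have h2 : ν k * g = rhoPerm h * ν k := by
          rw [hh]; group
        rw [← key] at h2
        exact (mul_left_cancel h2).symm
    · -- regularity
      intro x y
      refine ⟨⟨ν (cK (xi x) y), hmemN _⟩, ?_, ?_⟩
      · show ν (cK (xi x) y) x = y
        rw [νapp, ← cK_assoc, xi_right, one_cK]
      · rintro ⟨n, m, rfl⟩ hn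
        have hn' : ν m x = y := hn
        apply Subtype.ext
        show ν m = ν (cK (xi x) y)
        congr 1
        refine νcancel x _ _ ?_
        rw [hn', νapp, ← cK_assoc, xi_right, one_cK]
    · -- the isomorphism
      have einj : Function.Injective (fun k : K => (⟨(ν k)⁻¹, N.inv_mem (hmemN k)⟩ : N)) := by
        intro a b hab
        have h1 : (ν a)⁻¹ = (ν b)⁻¹ := congrArg Subtype.val hab
        have h2 : ν a = ν b := by rw [← inv_inv (ν a), h1, inv_inv]
        exact νcancel 1 a b (by rw [h2])
      have esurj : Function.Surjective
          (fun k : K => (⟨(ν k)⁻¹, N.inv_mem (hmemN k)⟩ : N)) := by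
        rintro ⟨n, m, rfl⟩
        exact ⟨xi m, Subtype.ext (by show (ν (xi m))⁻¹ = ν m; rw [νinv, inv_inv])⟩
      refine ⟨Equiv.ofBijective _ ⟨einj, esurj⟩, ?_⟩
      intro x y
      apply Subtype.ext
      show (ν (⟨circ γ (x : G) (y : G), hcl x y⟩ : K))⁻¹ = (ν x)⁻¹ * (ν y)⁻¹
      have : (⟨circ γ (x : G) (y : G), hcl x y⟩ : K) = cK x y := rfl
      rw [this, νmul, mul_inv_rev]

end HGS
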